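/- arXiv:0901.1451 — 3 statements merged into one kernel-verified Lean document; each statement's English description precedes it below -/
import Mathlib

section
/- Suppose v is an unlooped marked vertex of the marked graph G and no neighbor of v is marked. Then [G] = A·[G − v] + B·[G^v − v], where G − v is obtained from G by removing v and every edge incident on v. -/
open MvPolynomial

/-- A marked graph: a finite vertex set, an adjacency matrix over GF(2)
(the diagonal entry at `v` is 1 iff `v` carries a loop; for `v ≠ w` the `(v,w)` entry
is 1 iff `v` and `w` are adjacent), a designated set of marked vertices, and a number
of free loops. -/
structure MarkedGraph (V : Type) [Fintype V] [DecidableEq V] where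
  adj : Matrix V V (ZMod 2)
  marked : V → Bool
  freeLoops : ℕ

namespace MarkedGraph

variable {V : Type} [Fintype V] [DecidableEq V]

/-- GF(2)-nullity of a square matrix: the dimension of its kernel. -/
noncomputable def nullity {ι : Type*} [Fintype ι] (M : Matrix ι ι (ZMod 2)) : ℕ :=
  Module.finrank (ZMod 2) (LinearMap.ker M.mulVecLin)

/-- The diagonal matrix `Δ_T` over GF(2) whose diagonal entry at `v` is 1 iff `v ∈ T`. -/
def delta (T : Finset V) : Matrix V V (ZMod 2) :=
  Matrix.diagonal fun v => if v ∈ T then 1 else 0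

/-- The vertices kept in the submatrix `𝒜(G)_T`: delete each marked vertex whose
diagonal entry in `𝒜(G) + Δ_T` is 0. -/
def keep (G : MarkedGraph V) (T : Finset V) : Finset V :=
  Finset.univ.filter fun v => ¬ (G.marked v = true ∧ (G.adj + delta T) v v = 0)

/-- The submatrix `𝒜(G)_T` of `𝒜(G) + Δ_T`. -/
def subMat (G : MarkedGraph V) (T : Finset V) :
    Matrix (G.keep T) (G.keep T) (ZMod 2) :=
  fun i j => (G.adj + delta T) i.1 j.1

/-- The marked-graph bracket polynomial `[G] ∈ ℤ[A,B,d]`, where `A = X 0`, `B = X 1`,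
`d = X 2`:  `[G] = d^φ ⬝ Σ_{T ⊆ V(G)} A^(n-|T|) B^(|T|) d^(ν(𝒜(G)_T))`. -/
noncomputable def bracket (G : MarkedGraph V) : MvPolynomial (Fin 3) ℤ :=
  X 2 ^ G.freeLoops *
    ∑ T : Finset V,
      X 0 ^ (Fintype.card V - T.card) * X 1 ^ T.card * X 2 ^ nullity (G.subMat T)

/-- `x` is a neighbor of `v` (no vertex is a neighbor of itself). -/
def nbr (G : MarkedGraph V) (v x : V) : Prop := x ≠ v ∧ G.adj v x = 1

instance (G : MarkedGraph V) (v x : V) : Decidable (G.nbr v x) :=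
  inferInstanceAs (Decidable (x ≠ v ∧ G.adj v x = 1))

/-- Delete the vertices in `s`, together with all incident edges
(marks and free loops unchanged). -/
def delete (G : MarkedGraph V) (s : Finset V) : MarkedGraph {v : V // v ∉ s} where
  adj := fun i j => G.adj i.1 j.1
  marked := fun i => G.marked i.1
  freeLoops := G.freeLoops

/-- The local complement `G^v`: toggle every entry of the adjacency matrix (diagonal
entries included) whose row and column indices are both neighbors of `v`. -/
def localComp (G : MarkedGraph V) (v : V) : MarkedGraph V :=
  { G with adj := fun x y => if G.nbr v x ∧ G.nbr v y then G.adj x y + 1 else G.adj x y }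

/-- `G - {v,v}`: remove the loop at `v` (set the diagonal entry at `v` to 0). -/
def removeLoop (G : MarkedGraph V) (v : V) : MarkedGraph V :=
  { G with adj := fun x y => if x = v ∧ y = v then 0 else G.adj x y }

/-- `G + I`: toggle all loops. -/
def addI (G : MarkedGraph V) : MarkedGraph V :=
  { G with adj := G.adj + 1 }

/-- `G⁺`: adjoin one free loop. -/
def addFreeLoop (G : MarkedGraph V) : MarkedGraph V :=
  { G with freeLoops := G.freeLoops + 1 }

/-- The condition under which the pivot `G^{vw}` toggles the adjacency between `x`
and `y`: `x` is a neighbor of `v`, `y` is a neighbor of `w`, and either `x` is not a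
neighbor of `w` or `y` is not a neighbor of `v`. -/
def pivotCond (G : MarkedGraph V) (v w x y : V) : Prop :=
  G.nbr v x ∧ G.nbr w y ∧ (¬ G.nbr w x ∨ ¬ G.nbr v y)

instance (G : MarkedGraph V) (v w x y : V) : Decidable (G.pivotCond v w x y) :=
  inferInstanceAs (Decidable (G.nbr v x ∧ G.nbr w y ∧ (¬ G.nbr w x ∨ ¬ G.nbr v y)))

/-- The pivot `G^{vw}`: toggle the adjacency between every pair of distinct vertices
`x, y ∉ {v,w}` such that `x` is a neighbor of `v`, `y` is a neighbor of `w`, and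
either `x` is not a neighbor of `w` or `y` is not a neighbor of `v`
(loops are unaffected). -/
def pivot (G : MarkedGraph V) (v w : V) : MarkedGraph V :=
  { G with adj := fun x y =>
      if x ≠ v ∧ x ≠ w ∧ y ≠ v ∧ y ≠ w ∧ x ≠ y ∧
          (G.pivotCond v w x y ∨ G.pivotCond v w y x)
      then G.adj x y + 1 else G.adj x y }

/-- Interchange the neighbors of `v` and `w` in an adjacency matrix, keeping loops
and the edge between `v` and `w` unchanged. -/
def swapAdjacencies (M : Matrix V V (ZMod 2)) (v w : V) : Matrix V V (ZMod 2) :=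
  fun x y =>
    if x = y then M x y
    else if (x = v ∧ y = w) ∨ (x = w ∧ y = v) then M x y
    else M (Equiv.swap v w x) (Equiv.swap v w y)

/-- The marked pivot `G_c^{vw}`: the pivot `G^{vw}` with the marks on `v` and `w`
toggled and the neighbors of `v` and `w` interchanged (loops, the edge between `v`
and `w`, and free loops unchanged). -/
def markedPivot (G : MarkedGraph V) (v w : V) : MarkedGraph V where
  adj := swapAdjacencies (G.pivot v w).adj v w
  marked := fun u => if u = v ∨ u = w then !(G.marked u) else G.marked u
  freeLoops := G.freeLoops

/-- The disjoint union of two marked graphs: block-diagonal adjacency matrix,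
each vertex marked as it was, free loops added. -/
def disjUnion {V₁ V₂ : Type} [Fintype V₁] [DecidableEq V₁] [Fintype V₂] [DecidableEq V₂]
    (G₁ : MarkedGraph V₁) (G₂ : MarkedGraph V₂) : MarkedGraph (V₁ ⊕ V₂) where
  adj := Matrix.fromBlocks G₁.adj 0 0 G₂.adj
  marked := Sum.elim G₁.marked G₂.marked
  freeLoops := G₁.freeLoops + G₂.freeLoops

/-- Remove the three edges `{u,v}`, `{u,w}`, `{v,w}` (all else unchanged). -/
def removeEdges3 (G : MarkedGraph V) (u v w : V) : MarkedGraph V :=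
  { G with adj := fun x y =>
      if (x = u ∧ y = v) ∨ (x = v ∧ y = u) ∨ (x = u ∧ y = w) ∨ (x = w ∧ y = u) ∨
          (x = v ∧ y = w) ∨ (x = w ∧ y = v)
      then 0 else G.adj x y }

/-- Adjoin one isolated, unmarked vertex with no incident edges; it is looped iff
`loop = true`. -/
def addIsolated (G : MarkedGraph V) (loop : Bool) : MarkedGraph (Option V) where
  adj := fun x y =>
    match x, y with
    | some a, some b => G.adj a b
    | none, none => if loop then 1 else 0
    | _, _ => 0
  marked := fun x => match x with | some a => G.marked a | none => false
  freeLoops := G.freeLoops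

/-- The number of vertices of `s` that are adjacent to `x`. -/
def countAdj (G : MarkedGraph V) (x : V) (s : Finset V) : ℕ :=
  (s.filter fun y => G.adj x y = 1).card

/-- The reduced marked-graph bracket `⟨G⟩ ∈ ℤ[A, A⁻¹]`: substitute `B ↦ A⁻¹` and
`d ↦ -A² - A⁻²` in `[G]`. -/
noncomputable def reducedBracket (G : MarkedGraph V) : LaurentPolynomial ℤ :=
  MvPolynomial.aeval
    ![LaurentPolynomial.T 1, LaurentPolynomial.T (-1),
      -LaurentPolynomial.T 2 - LaurentPolynomial.T (-2)] G.bracket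

/-- The number of looped vertices of `G`. -/
def numLoops (G : MarkedGraph V) : ℕ :=
  (Finset.univ.filter fun v => G.adj v v = 1).card

/-- The Jones polynomial `V_G = (-1)^n ⬝ q^(3n-6ℓ) ⬝ ⟨G⟩(q⁻¹)`, as a Laurent
polynomial in the formal variable `q` (representing `t^(1/4)`); substituting
`A ↦ q⁻¹` in `⟨G⟩` amounts to substituting `A ↦ q⁻¹`, `B ↦ q`, `d ↦ -q² - q⁻²`
in `[G]`. -/
noncomputable def jones (G : MarkedGraph V) : LaurentPolynomial ℤ :=
  (-1) ^ Fintype.card V *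
    LaurentPolynomial.T (3 * (Fintype.card V : ℤ) - 6 * (G.numLoops : ℤ)) *
    MvPolynomial.aeval
      ![LaurentPolynomial.T (-1), LaurentPolynomial.T 1,
        -LaurentPolynomial.T 2 - LaurentPolynomial.T (-2)] G.bracket

end MarkedGraph

section BracketAux

open MarkedGraph Finset

variable {V : Type} [Fintype V] [DecidableEq V]

lemma nullity_add_rank {ι : Type*} [Fintype ι] (M : Matrix ι ι (ZMod 2)) :
    MarkedGraph.nullity M + M.rank = Fintype.card ι := by
  have := LinearMap.finrank_range_add_finrank_ker M.mulVecLin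
  rw [Module.finrank_pi] at this
  unfold MarkedGraph.nullity Matrix.rank
  omega

lemma nullity_reindex {ι ι' : Type*} [Fintype ι] [Fintype ι'] [DecidableEq ι] [DecidableEq ι']
    (M : Matrix ι ι (ZMod 2)) (e : ι' ≃ ι) :
    MarkedGraph.nullity (M.submatrix e e) = MarkedGraph.nullity M := by
  have h1 := nullity_add_rank (M.submatrix e e)
  have h2 := nullity_add_rank M
  rw [Matrix.rank_submatrix M e e] at h1
  have := Fintype.card_congr e
  omega

lemma nullity_option {κ : Type*} [Fintype κ] [DecidableEq κ]
    (M : Matrix (Option κ) (Option κ) (ZMod 2)) (h : M none none = 1) :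
    MarkedGraph.nullity M = MarkedGraph.nullity
      (Matrix.of fun x y : κ => M (some x) (some y) - M (some x) none * M none (some y)) := by
  set S : Matrix κ κ (ZMod 2) :=
    Matrix.of fun x y : κ => M (some x) (some y) - M (some x) none * M none (some y) with hS
  have h2 : (2 : ZMod 2) = 0 := by decide
  have hmulvec : ∀ u : Option κ → ZMod 2, ∀ i, M.mulVec u i
      = M i none * u none + ∑ y, M i (some y) * u (some y) := by
    intro u i
    rw [Matrix.mulVec, dotProduct, Fintype.sum_option]
  have key1 : ∀ u : Option κ → ZMod 2, M.mulVec u = 0 →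
      (∀ x, S.mulVec (fun y => u (some y)) x = 0) := by
    intro u hu x
    have h0 := congrFun hu none
    have hx := congrFun hu (some x)
    rw [hmulvec, h] at h0
    rw [hmulvec] at hx
    simp only [Pi.zero_apply] at h0 hx
    have hun : u none = -∑ y, M none (some y) * u (some y) := by linear_combination h0
    rw [Matrix.mulVec, dotProduct]
    simp only [hS, Matrix.of_apply, sub_mul]
    rw [Finset.sum_sub_distrib]
    have : ∑ y, M (some x) none * M none (some y) * u (some y)
        = M (some x) none * ∑ y, M none (some y) * u (some y) := by
      rw [Finset.mul_sum]; congr 1; ext y; ring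
    rw [this]
    linear_combination hx + hun * M (some x) none +
      (-(M (some x) none * ∑ y : κ, M none (some y) * u (some y))
        - M (some x) none * u none) * h2
  have key2 : ∀ w : κ → ZMod 2, S.mulVec w = 0 →
      M.mulVec (fun o => Option.elim o (-∑ y, M none (some y) * w y) w) = 0 := by
    intro w hw
    funext i
    rw [hmulvec]
    match i with
    | none =>
      simp only [Option.elim, h, one_mul, Pi.zero_apply]
      ring
    | some x =>
      have hx := congrFun hw x
      rw [Matrix.mulVec, dotProduct] at hx
      simp only [hS, Matrix.of_apply, sub_mul, Pi.zero_apply] at hx ⊢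
      rw [Finset.sum_sub_distrib] at hx
      have : ∑ y, M (some x) none * M none (some y) * w y
          = M (some x) none * ∑ y, M none (some y) * w y := by
        rw [Finset.mul_sum]; congr 1; ext y; ring
      rw [this] at hx
      simp only [Option.elim]
      linear_combination hx
  let f : LinearMap.ker M.mulVecLin →ₗ[ZMod 2] LinearMap.ker S.mulVecLin :=
  { toFun := fun u => ⟨fun x => u.1 (some x), by
      rw [LinearMap.mem_ker, Matrix.mulVecLin_apply]
      funext x
      exact key1 u.1 (by have := u.2; rwa [LinearMap.mem_ker, Matrix.mulVecLin_apply] at this) x⟩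
    map_add' := fun _ _ => rfl
    map_smul' := fun _ _ => rfl }
  have hnone : ∀ u : Option κ → ZMod 2, M.mulVec u = 0 →
      u none = -∑ y, M none (some y) * u (some y) := by
    intro u hu
    have h0 := congrFun hu none
    rw [hmulvec, h] at h0
    simp only [Pi.zero_apply] at h0
    linear_combination h0
  have hbij : Function.Bijective f := by
    constructor
    · intro u w huw
      have hu : M.mulVec u.1 = 0 := by
        have := u.2; rwa [LinearMap.mem_ker, Matrix.mulVecLin_apply] at this
      have hw : M.mulVec w.1 = 0 := by
        have := w.2; rwa [LinearMap.mem_ker, Matrix.mulVecLin_apply] at this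
      have hsome : ∀ x, u.1 (some x) = w.1 (some x) := by
        intro x
        exact congrFun (congrArg Subtype.val huw) x
      apply Subtype.ext
      funext o
      match o with
      | some x => exact hsome x
      | none =>
        rw [hnone u.1 hu, hnone w.1 hw]
        congr 1
        exact Finset.sum_congr rfl fun y _ => by rw [hsome y]
    · intro w
      have hw : S.mulVec w.1 = 0 := by
        have := w.2; rwa [LinearMap.mem_ker, Matrix.mulVecLin_apply] at this
      refine ⟨⟨fun o => Option.elim o (-∑ y, M none (some y) * w.1 y) w.1, ?_⟩, ?_⟩
      · rw [LinearMap.mem_ker, Matrix.mulVecLin_apply]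
        exact key2 w.1 hw
      · exact Subtype.ext (funext fun x => rfl)
  exact (LinearEquiv.ofBijective f hbij).finrank_eq

/-- The summand of the bracket polynomial. -/
noncomputable def bterm (G : MarkedGraph V) (T : Finset V) : MvPolynomial (Fin 3) ℤ :=
  MvPolynomial.X 0 ^ (Fintype.card V - T.card) * MvPolynomial.X 1 ^ T.card *
    MvPolynomial.X 2 ^ MarkedGraph.nullity (G.subMat T)

lemma mem_keep {G : MarkedGraph V} {T : Finset V} {x : V} :
    x ∈ G.keep T ↔ ¬(G.marked x = true ∧ (G.adj + MarkedGraph.delta T) x x = 0) := by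
  simp [MarkedGraph.keep]

lemma addDelta_apply (G : MarkedGraph V) (T : Finset V) (x y : V) :
    (G.adj + MarkedGraph.delta T) x y
      = G.adj x y + if x = y then (if x ∈ T then 1 else 0) else 0 := by
  simp [MarkedGraph.delta, Matrix.add_apply, Matrix.diagonal_apply]

lemma mem_map_subtype' {p : V → Prop} [DecidablePred p] (T' : Finset {x // p x})
    (x : {x // p x}) :
    x.1 ∈ T'.map (Function.Embedding.subtype p) ↔ x ∈ T' := by
  simp only [Finset.mem_map, Function.Embedding.coe_subtype]
  constructor
  · rintro ⟨a, ha, hav⟩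
    rwa [show a = x from Subtype.ext hav] at ha
  · intro hx
    exact ⟨x, hx, rfl⟩

lemma not_mem_map_subtype (v : V) (T' : Finset {x : V // x ∉ ({v} : Finset V)}) :
    v ∉ T'.map (Function.Embedding.subtype _) := by
  simp only [Finset.mem_map, Function.Embedding.coe_subtype]
  rintro ⟨a, _, hav⟩
  exact a.2 (by rw [hav]; exact Finset.mem_singleton_self v)

lemma card_compl_singleton (v : V) :
    Fintype.card {x : V // x ∉ ({v} : Finset V)} = Fintype.card V - 1 := by
  have e : {x : V // x ∉ ({v} : Finset V)} ≃ {x : V // ¬ x = v} :=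
    Equiv.subtypeEquivRight fun x => not_congr Finset.mem_singleton
  rw [Fintype.card_congr e, Fintype.card_subtype_compl, Fintype.card_subtype_eq]

lemma nullity_del (G : MarkedGraph V) (v : V)
    (hunlooped : G.adj v v = 0) (hmarked : G.marked v = true)
    (T' : Finset {x : V // x ∉ ({v} : Finset V)}) :
    MarkedGraph.nullity ((G.delete {v}).subMat T') =
    MarkedGraph.nullity (G.subMat (T'.map (Function.Embedding.subtype _))) := by
  set T := T'.map (Function.Embedding.subtype _) with hT
  have hvT : v ∉ T := not_mem_map_subtype v T'
  have hmm : ∀ x : {x : V // x ∉ ({v} : Finset V)}, x.1 ∈ T ↔ x ∈ T' :=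
    fun x => mem_map_subtype' T' x
  have hkeep : ∀ x : {x : V // x ∉ ({v} : Finset V)},
      x ∈ (G.delete {v}).keep T' ↔ x.1 ∈ G.keep T := by
    intro x
    rw [mem_keep, mem_keep, addDelta_apply, addDelta_apply, if_pos rfl, if_pos rfl]
    have h1 : (G.delete {v}).marked x = G.marked x.1 := rfl
    have h2 : (G.delete {v}).adj x x = G.adj x.1 x.1 := rfl
    rw [h1, h2, if_congr (hmm x) rfl rfl]
  have hne : ∀ y ∈ G.keep T, y ∉ ({v} : Finset V) := by
    intro y hyK hyv
    rw [Finset.mem_singleton] at hyv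
    subst hyv
    rw [mem_keep] at hyK
    exact hyK ⟨hmarked, by rw [addDelta_apply, if_pos rfl, if_neg hvT, hunlooped, add_zero]⟩
  let e : {x // x ∈ (G.delete {v}).keep T'} ≃ {y // y ∈ G.keep T} :=
  { toFun := fun x => ⟨x.1.1, (hkeep x.1).mp x.2⟩
    invFun := fun y => ⟨⟨y.1, hne y.1 y.2⟩, (hkeep ⟨y.1, hne y.1 y.2⟩).mpr y.2⟩
    left_inv := fun x => Subtype.ext (Subtype.ext rfl)
    right_inv := fun y => Subtype.ext rfl }
  have hmat : (G.delete {v}).subMat T' = (G.subMat T).submatrix e e := by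
    ext x y
    show ((G.delete {v}).adj + MarkedGraph.delta T') x.1 y.1
        = (G.adj + MarkedGraph.delta T) x.1.1 y.1.1
    rw [addDelta_apply, addDelta_apply]
    have hadj : (G.delete {v}).adj x.1 y.1 = G.adj x.1.1 y.1.1 := rfl
    rw [hadj]
    congr 1
    by_cases hxy : x.1 = y.1
    · rw [if_pos hxy, if_pos (congrArg Subtype.val hxy), if_congr (hmm x.1).symm rfl rfl]
    · rw [if_neg hxy, if_neg (fun h => hxy (Subtype.ext h))]
  rw [hmat, nullity_reindex]

lemma nullity_loc (G : MarkedGraph V) (hsym : G.adj.IsSymm) (v : V)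
    (hunlooped : G.adj v v = 0) (hmarked : G.marked v = true)
    (hnbr : ∀ x, G.nbr v x → G.marked x = false)
    (T' : Finset {x : V // x ∉ ({v} : Finset V)}) :
    MarkedGraph.nullity (((G.localComp v).delete {v}).subMat T') =
    MarkedGraph.nullity (G.subMat (insert v (T'.map (Function.Embedding.subtype _)))) := by
  set T : Finset V := insert v (T'.map (Function.Embedding.subtype _)) with hT
  have hvT : v ∈ T := Finset.mem_insert_self v _
  have hne' : ∀ x : {x : V // x ∉ ({v} : Finset V)}, x.1 ≠ v := by
    intro x hx
    exact x.2 (by rw [hx]; exact Finset.mem_singleton_self v)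
  have hmm : ∀ x : {x : V // x ∉ ({v} : Finset V)}, x.1 ∈ T ↔ x ∈ T' := by
    intro x
    rw [hT, Finset.mem_insert, mem_map_subtype' T' x]
    exact ⟨fun h => h.resolve_left (hne' x), Or.inr⟩
  have hvK : v ∈ G.keep T := by
    rw [mem_keep, addDelta_apply, if_pos rfl, if_pos hvT, hunlooped, zero_add]
    rintro ⟨-, h⟩
    exact one_ne_zero h
  set H := (G.localComp v).delete ({v} : Finset V) with hH
  have hHadj : ∀ x y : {x : V // x ∉ ({v} : Finset V)},
      H.adj x y = if G.nbr v x.1 ∧ G.nbr v y.1 then G.adj x.1 y.1 + 1 else G.adj x.1 y.1 := by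
    intro x y; rfl
  have hkeep : ∀ x : {x : V // x ∉ ({v} : Finset V)},
      x ∈ H.keep T' ↔ x.1 ∈ G.keep T := by
    intro x
    rw [mem_keep, mem_keep, addDelta_apply, addDelta_apply, if_pos rfl, if_pos rfl]
    have h1 : H.marked x = G.marked x.1 := rfl
    rw [h1, hHadj x x]
    by_cases hn : G.nbr v x.1
    · simp [hnbr x.1 hn]
    · rw [if_neg (fun h => hn h.1), if_congr (hmm x) rfl rfl]
  let e : Option {x // x ∈ H.keep T'} ≃ {y // y ∈ G.keep T} :=
  { toFun := fun o => Option.elim o ⟨v, hvK⟩ (fun x => ⟨x.1.1, (hkeep x.1).mp x.2⟩)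
    invFun := fun y => if h : y.1 = v then none else
      some ⟨⟨y.1, by simpa using h⟩, (hkeep ⟨y.1, by simpa using h⟩).mpr y.2⟩
    left_inv := by
      intro o
      match o with
      | none => exact dif_pos rfl
      | some x =>
        beta_reduce
        rw [Option.elim_some, dif_neg (hne' x.1)]
    right_inv := by
      intro y
      by_cases h : y.1 = v
      · beta_reduce
        rw [dif_pos h, Option.elim_none]
        exact Subtype.ext h.symm
      · beta_reduce
        rw [dif_neg h, Option.elim_some]  }
  have h11 : ((G.subMat T).submatrix e e) none none = 1 := by
    show (G.adj + MarkedGraph.delta T) v v = 1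
    rw [addDelta_apply, if_pos rfl, if_pos hvT, hunlooped, zero_add]
  have hmat : H.subMat T' = Matrix.of fun x y : {x // x ∈ H.keep T'} =>
      ((G.subMat T).submatrix e e) (some x) (some y)
        - ((G.subMat T).submatrix e e) (some x) none
          * ((G.subMat T).submatrix e e) none (some y) := by
    funext x y
    show (H.adj + MarkedGraph.delta T') x.1 y.1
        = (G.adj + MarkedGraph.delta T) x.1.1 y.1.1
          - (G.adj + MarkedGraph.delta T) x.1.1 v * (G.adj + MarkedGraph.delta T) v y.1.1
    rw [addDelta_apply, addDelta_apply, addDelta_apply, addDelta_apply,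
      if_neg (hne' x.1), if_neg (fun h : v = y.1.1 => hne' y.1 h.symm),
      add_zero, add_zero, hHadj x y]
    have hdelta : (if x.1 = y.1 then (if x.1 ∈ T' then (1 : ZMod 2) else 0) else 0)
        = (if x.1.1 = y.1.1 then (if x.1.1 ∈ T then 1 else 0) else 0) := by
      by_cases hxy : x.1 = y.1
      · rw [if_pos hxy, if_pos (congrArg Subtype.val hxy), if_congr (hmm x.1).symm rfl rfl]
      · rw [if_neg hxy, if_neg (fun h => hxy (Subtype.ext h))]
    rw [hdelta]
    have hsx : G.adj x.1.1 v = G.adj v x.1.1 := hsym.apply v x.1.1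
    rw [hsx]
    have hcases : ∀ a : ZMod 2, a = 0 ∨ a = 1 := by decide
    have hnbrx : G.nbr v x.1.1 ↔ G.adj v x.1.1 = 1 :=
      ⟨fun h => h.2, fun h => ⟨hne' x.1, h⟩⟩
    have hnbry : G.nbr v y.1.1 ↔ G.adj v y.1.1 = 1 :=
      ⟨fun h => h.2, fun h => ⟨hne' y.1, h⟩⟩
    rcases hcases (G.adj v x.1.1) with hx0 | hx1
    · rw [if_neg (fun h => by rw [hnbrx] at h; exact absurd hx0 (by rw [h.1]; decide)), hx0]
      ring
    · rcases hcases (G.adj v y.1.1) with hy0 | hy1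
      · rw [if_neg (fun h => by rw [hnbry] at h; exact absurd hy0 (by rw [h.2]; decide)), hy0]
        ring
      · rw [if_pos ⟨hnbrx.mpr hx1, hnbry.mpr hy1⟩, hx1, hy1]
        have h2 : (2 : ZMod 2) = 0 := by decide
        linear_combination h2
  rw [hmat, ← nullity_option ((G.subMat T).submatrix e e) h11, nullity_reindex]

lemma bterm_del (G : MarkedGraph V) (v : V)
    (hunlooped : G.adj v v = 0) (hmarked : G.marked v = true)
    (T' : Finset {x : V // x ∉ ({v} : Finset V)}) :
    MvPolynomial.X 0 * bterm (G.delete {v}) T'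
      = bterm G (T'.map (Function.Embedding.subtype _)) := by
  unfold bterm
  rw [Finset.card_map, ← nullity_del G v hunlooped hmarked T', card_compl_singleton v]
  have hpos : 1 ≤ Fintype.card V := Fintype.card_pos_iff.mpr ⟨v⟩
  have hle : T'.card ≤ Fintype.card V - 1 := by
    rw [← card_compl_singleton v]; exact Finset.card_le_univ T'
  have hcard : Fintype.card V - T'.card = (Fintype.card V - 1 - T'.card) + 1 := by omega
  rw [hcard, pow_succ]
  ring

lemma bterm_loc (G : MarkedGraph V) (hsym : G.adj.IsSymm) (v : V)
    (hunlooped : G.adj v v = 0) (hmarked : G.marked v = true)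
    (hnbr : ∀ x, G.nbr v x → G.marked x = false)
    (T' : Finset {x : V // x ∉ ({v} : Finset V)}) :
    MvPolynomial.X 1 * bterm ((G.localComp v).delete {v}) T'
      = bterm G (insert v (T'.map (Function.Embedding.subtype _))) := by
  unfold bterm
  rw [Finset.card_insert_of_notMem (not_mem_map_subtype v T'), Finset.card_map,
    ← nullity_loc G hsym v hunlooped hmarked hnbr T', card_compl_singleton v]
  have hpos : 1 ≤ Fintype.card V := Fintype.card_pos_iff.mpr ⟨v⟩
  have hle : T'.card ≤ Fintype.card V - 1 := by
    rw [← card_compl_singleton v]; exact Finset.card_le_univ T'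
  have hcard : Fintype.card V - (T'.card + 1) = Fintype.card V - 1 - T'.card := by omega
  rw [hcard, pow_succ]
  ring

end BracketAux

/-- If `v` is an unlooped marked vertex with no marked neighbor then
`[G] = A⬝[G - v] + B⬝[G^v - v]`. -/
theorem bracket_unlooped_marked {V : Type} [Fintype V] [DecidableEq V]
    (G : MarkedGraph V) (hsym : G.adj.IsSymm) (v : V)
    (hunlooped : G.adj v v = 0) (hmarked : G.marked v = true)
    (hnbr : ∀ x, G.nbr v x → G.marked x = false) :
    G.bracket =
      X 0 * (G.delete {v}).bracket + X 1 * ((G.localComp v).delete {v}).bracket := by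
  classical
  have hb1 : G.bracket = MvPolynomial.X 2 ^ G.freeLoops * ∑ T : Finset V, bterm G T := rfl
  have hb2 : (G.delete {v}).bracket = MvPolynomial.X 2 ^ G.freeLoops *
      ∑ T : Finset {x : V // x ∉ ({v} : Finset V)}, bterm (G.delete {v}) T := rfl
  have hb3 : ((G.localComp v).delete {v}).bracket = MvPolynomial.X 2 ^ G.freeLoops *
      ∑ T : Finset {x : V // x ∉ ({v} : Finset V)}, bterm ((G.localComp v).delete {v}) T := rfl
  rw [hb1, hb2, hb3]
  have h1 : ∑ T' : Finset {x : V // x ∉ ({v} : Finset V)},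
        MvPolynomial.X 0 * bterm (G.delete {v}) T'
      = ∑ T ∈ Finset.univ.filter (fun T : Finset V => v ∉ T), bterm G T := by
    refine Finset.sum_nbij' (fun T' => T'.map (Function.Embedding.subtype _))
      (fun T => T.subtype _) ?_ ?_ ?_ ?_ ?_
    · intro T' _
      simp only [Finset.mem_filter, Finset.mem_univ, true_and]
      exact not_mem_map_subtype v T'
    · intro T _; exact Finset.mem_univ _
    · intro T' _
      beta_reduce
      ext a
      rw [Finset.mem_subtype, mem_map_subtype']
    · intro T hT
      beta_reduce
      rw [Finset.mem_filter] at hT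
      rw [Finset.subtype_map]
      refine Finset.filter_true_of_mem ?_
      intro x hx hxv
      rw [Finset.mem_singleton] at hxv
      subst hxv
      exact hT.2 hx
    · intro T' _
      exact bterm_del G v hunlooped hmarked T'
  have h2 : ∑ T' : Finset {x : V // x ∉ ({v} : Finset V)},
        MvPolynomial.X 1 * bterm ((G.localComp v).delete {v}) T'
      = ∑ T ∈ Finset.univ.filter (fun T : Finset V => ¬ v ∉ T), bterm G T := by
    refine Finset.sum_nbij' (fun T' => insert v (T'.map (Function.Embedding.subtype _)))
      (fun T => (T.erase v).subtype _) ?_ ?_ ?_ ?_ ?_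
    · intro T' _
      simp only [Finset.mem_filter, Finset.mem_univ, true_and, not_not]
      exact Finset.mem_insert_self v _
    · intro T _; exact Finset.mem_univ _
    · intro T' _
      beta_reduce
      rw [Finset.erase_insert (not_mem_map_subtype v T')]
      ext a
      rw [Finset.mem_subtype, mem_map_subtype']
    · intro T hT
      beta_reduce
      rw [Finset.mem_filter, not_not] at hT
      rw [Finset.subtype_map]
      have : (T.erase v).filter (fun x => x ∉ ({v} : Finset V)) = T.erase v := by
        refine Finset.filter_true_of_mem ?_
        intro x hx hxv
        rw [Finset.mem_singleton] at hxv
        exact (Finset.mem_erase.mp hx).1 hxv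
      rw [this, Finset.insert_erase hT.2]
    · intro T' _
      exact bterm_loc G hsym v hunlooped hmarked hnbr T'
  have hsplit : ∑ T : Finset V, bterm G T
      = ∑ T ∈ Finset.univ.filter (fun T : Finset V => v ∉ T), bterm G T
        + ∑ T ∈ Finset.univ.filter (fun T : Finset V => ¬ v ∉ T), bterm G T :=
    (Finset.sum_filter_add_sum_filter_not _ _ _).symm
  rw [hsplit, ← h1, ← h2, ← Finset.mul_sum, ← Finset.mul_sum]
  ring
end

section
/- Suppose v is a looped marked vertex of the marked graph G and no neighbor of v is marked. Then [G] = B·[G − v] + A·[G^v − v]. -/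
open MvPolynomial

namespace MarkedGraph

variable {V : Type} [Fintype V] [DecidableEq V]

lemma zmod2_aez : ∀ a b : ZMod 2, a + b = 0 ↔ a = b := by decide

lemma zmod2_add_self : ∀ a : ZMod 2, a + a = 0 := by decide

lemma zmod2_cases : ∀ a : ZMod 2, a = 0 ∨ a = 1 := by decide

lemma mulVec_apply' {κ : Type*} [Fintype κ] (N : Matrix κ κ (ZMod 2)) (x : κ → ZMod 2) (i : κ) :
    N.mulVec x i = ∑ j, N i j * x j := rfl

lemma sum_split' {ι M : Type*} [Fintype ι] [DecidableEq ι] [AddCommMonoid M] (v : ι) (f : ι → M) :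
    ∑ y : ι, f y = f v + ∑ y : {x : ι // x ≠ v}, f y.1 := by
  rw [← Finset.sum_add_sum_compl {v} f, Finset.sum_singleton]
  congr 1
  exact Finset.sum_subtype _ (by simp) f

lemma rank_add_nullity {ι : Type*} [Fintype ι] [DecidableEq ι] (M : Matrix ι ι (ZMod 2)) :
    M.rank + nullity M = Fintype.card ι := by
  have := LinearMap.finrank_range_add_finrank_ker M.mulVecLin
  simpa [Matrix.rank, nullity] using this

lemma nullity_reindex {ι ι' : Type*} [Fintype ι] [DecidableEq ι] [Fintype ι'] [DecidableEq ι']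
    (M : Matrix ι ι (ZMod 2)) (e : ι' ≃ ι) :
    nullity (M.submatrix e e) = nullity M := by
  have h1 := rank_add_nullity M
  have h2 := rank_add_nullity (M.submatrix e e)
  have h3 : (M.submatrix e e).rank = M.rank := Matrix.rank_submatrix M e e
  have h4 : Fintype.card ι' = Fintype.card ι := Fintype.card_congr e
  omega

lemma nullity_pivot {ι : Type*} [Fintype ι] [DecidableEq ι] (M : Matrix ι ι (ZMod 2))
    (v : ι) (hv : M v v = 1) :
    nullity M =
      nullity (Matrix.of fun x y : {x : ι // x ≠ v} => M x.1 y.1 + M x.1 v * M v y.1) := by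
  classical
  set M' : Matrix {x : ι // x ≠ v} {x : ι // x ≠ v} (ZMod 2) :=
    Matrix.of fun x y => M x.1 y.1 + M x.1 v * M v y.1 with hM'
  set Bf : ({x : ι // x ≠ v} → ZMod 2) → (ι → ZMod 2) :=
    fun x i => if h : i = v then ∑ y : {x : ι // x ≠ v}, M v y.1 * x y else x ⟨i, h⟩ with hBf
  have hBv : ∀ x, Bf x v = ∑ y : {x : ι // x ≠ v}, M v y.1 * x y := by
    intro x; simp [hBf]
  have hBne : ∀ x (i : ι) (h : i ≠ v), Bf x i = x ⟨i, h⟩ := by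
    intro x i h; simp [hBf, h]
  have hF : ∀ x : ι → ZMod 2, M.mulVec x = 0 → M'.mulVec (fun i => x i.1) = 0 := by
    intro x hx
    have hrow : ∀ i, ∑ j, M i j * x j = 0 := by
      intro i; have := congrFun hx i; rwa [mulVec_apply'] at this
    have hxv : ∀ i, ∑ y : {x : ι // x ≠ v}, M i y.1 * x y.1 = M i v * x v := by
      intro i
      have h := hrow i
      rw [sum_split' v (fun j => M i j * x j)] at h
      exact ((zmod2_aez _ _).mp (by linear_combination h)).symm
    funext i
    rw [Pi.zero_apply, mulVec_apply']
    have hexp : ∑ j : {x : ι // x ≠ v}, M' i j * x j.1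
        = (∑ j : {x : ι // x ≠ v}, M i.1 j.1 * x j.1)
          + M i.1 v * ∑ j : {x : ι // x ≠ v}, M v j.1 * x j.1 := by
      rw [Finset.mul_sum, ← Finset.sum_add_distrib]
      refine Finset.sum_congr rfl fun j _ => ?_
      simp only [hM', Matrix.of_apply]; ring
    rw [hexp, hxv i.1, hxv v, hv, one_mul]
    exact zmod2_add_self _
  have hB : ∀ x : {x : ι // x ≠ v} → ZMod 2, M'.mulVec x = 0 → M.mulVec (Bf x) = 0 := by
    intro x hx
    have hrow : ∀ i : {x : ι // x ≠ v}, ∑ j : {x : ι // x ≠ v},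
        (M i.1 j.1 + M i.1 v * M v j.1) * x j = 0 := by
      intro i
      have := congrFun hx i
      rw [mulVec_apply'] at this
      simpa only [hM', Matrix.of_apply, Pi.zero_apply] using this
    funext i
    rw [Pi.zero_apply, mulVec_apply', sum_split' v (fun j => M i j * Bf x j), hBv]
    have hrest : (∑ y : {x : ι // x ≠ v}, M i y.1 * Bf x y.1)
        = ∑ y : {x : ι // x ≠ v}, M i y.1 * x y :=
      Finset.sum_congr rfl fun y _ => by rw [hBne x y.1 y.2]
    rw [hrest]
    by_cases hi : i = v
    · rw [hi, hv, one_mul]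
      exact zmod2_add_self _
    · have h := hrow ⟨i, hi⟩
      have hexp : ∑ j : {x : ι // x ≠ v}, (M i j.1 + M i v * M v j.1) * x j
          = (∑ j : {x : ι // x ≠ v}, M i j.1 * x j)
            + M i v * ∑ j : {x : ι // x ≠ v}, M v j.1 * x j := by
        rw [Finset.mul_sum, ← Finset.sum_add_distrib]
        exact Finset.sum_congr rfl fun j _ => by ring
      rw [hexp] at h
      have h2 : ∑ j : {x : ι // x ≠ v}, M i j.1 * x j
          = M i v * ∑ j : {x : ι // x ≠ v}, M v j.1 * x j :=
        (zmod2_aez _ _).mp (by linear_combination h)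
      rw [h2]
      exact zmod2_add_self _
  have memF : ∀ (x : ι → ZMod 2), x ∈ LinearMap.ker M.mulVecLin →
      (fun i : {x : ι // x ≠ v} => x i.1) ∈ LinearMap.ker M'.mulVecLin := fun x hx =>
    LinearMap.mem_ker.mpr (by
      rw [Matrix.mulVecLin_apply]
      exact hF x (by rw [← Matrix.mulVecLin_apply]; exact LinearMap.mem_ker.mp hx))
  have memB : ∀ (x : {x : ι // x ≠ v} → ZMod 2), x ∈ LinearMap.ker M'.mulVecLin →
      Bf x ∈ LinearMap.ker M.mulVecLin := fun x hx =>
    LinearMap.mem_ker.mpr (by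
      rw [Matrix.mulVecLin_apply]
      exact hB x (by rw [← Matrix.mulVecLin_apply]; exact LinearMap.mem_ker.mp hx))
  have e : (LinearMap.ker M.mulVecLin) ≃ₗ[ZMod 2] (LinearMap.ker M'.mulVecLin) :=
    { toFun := fun x => ⟨fun i => x.1 i.1, memF x.1 x.2⟩
      invFun := fun y => ⟨Bf y.1, memB y.1 y.2⟩
      map_add' := fun a b => Subtype.ext rfl
      map_smul' := fun c a => Subtype.ext rfl
      left_inv := by
        rintro ⟨x, hx⟩
        apply Subtype.ext
        funext i
        show Bf (fun i => x i.1) i = x i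
        by_cases hi : i = v
        · rw [hi, hBv]
          have hker : M.mulVec x = 0 := by
            rw [← Matrix.mulVecLin_apply]; exact LinearMap.mem_ker.mp hx
          have hrowv : ∑ j, M v j * x j = 0 := by
            have := congrFun hker v; rwa [mulVec_apply'] at this
          rw [sum_split' v (fun j => M v j * x j), hv, one_mul] at hrowv
          exact ((zmod2_aez _ _).mp (by linear_combination hrowv)).symm
        · rw [hBne _ i hi]
      right_inv := by
        rintro ⟨x, hx⟩
        apply Subtype.ext
        funext i
        show Bf x i.1 = x i
        rw [hBne x i.1 i.2] }
  calc nullity M = Module.finrank (ZMod 2) (LinearMap.ker M.mulVecLin) := rfl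
    _ = Module.finrank (ZMod 2) (LinearMap.ker M'.mulVecLin) := e.finrank_eq
    _ = nullity M' := rfl

lemma finset_sum_split (v : V)
    {M : Type*} [AddCommMonoid M] (f : Finset V → M) :
    ∑ T : Finset V, f T =
      (∑ T : Finset {u : V // u ∉ ({v} : Finset V)},
        f (insert v (T.map (Function.Embedding.subtype _)))) +
      ∑ T : Finset {u : V // u ∉ ({v} : Finset V)},
        f (T.map (Function.Embedding.subtype _)) := by
  classical
  rw [← Finset.sum_filter_add_sum_filter_not Finset.univ (fun T => v ∈ T) f]
  have hfilt : ∀ T : Finset V, T.filter (fun x => x ∉ ({v} : Finset V)) = T.erase v := by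
    intro T
    rw [← Finset.filter_ne']
    exact Finset.filter_congr (by simp)
  congr 1
  · refine Finset.sum_bij' (i := fun T _ => T.subtype (fun x => x ∉ ({v} : Finset V)))
      (j := fun T _ => insert v (T.map (Function.Embedding.subtype _)))
      (fun T hT => Finset.mem_univ _)
      (fun T hT => Finset.mem_filter.mpr ⟨Finset.mem_univ _, Finset.mem_insert_self _ _⟩)
      ?_ ?_ ?_
    · intro T hT
      try dsimp only
      rw [Finset.subtype_map, hfilt]
      exact Finset.insert_erase (Finset.mem_filter.mp hT).2
    · intro T hT
      try dsimp only
      ext u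
      rw [Finset.mem_subtype, Finset.mem_insert, Finset.mem_map]
      constructor
      · rintro (h | ⟨a, ha, hau⟩)
        · exact absurd h (by simpa using u.2)
        · simp only [Function.Embedding.coe_subtype] at hau
          rwa [show a = u from Subtype.ext hau] at ha
      · intro h; exact Or.inr ⟨u, h, rfl⟩
    · intro T hT
      try dsimp only
      congr 1
      rw [Finset.subtype_map, hfilt]
      exact (Finset.insert_erase (Finset.mem_filter.mp hT).2).symm
  · refine Finset.sum_bij' (i := fun T _ => T.subtype (fun x => x ∉ ({v} : Finset V)))
      (j := fun T _ => T.map (Function.Embedding.subtype _))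
      (fun T hT => Finset.mem_univ _)
      (fun T hT => Finset.mem_filter.mpr ⟨Finset.mem_univ _, by
        rw [Finset.mem_map]
        rintro ⟨a, ha, hav⟩
        simp only [Function.Embedding.coe_subtype] at hav
        exact absurd hav (by simpa using a.2)⟩)
      ?_ ?_ ?_
    · intro T hT
      try dsimp only
      exact Finset.subtype_map_of_mem fun x hx => by
        simp only [Finset.mem_singleton]
        rintro rfl
        exact (Finset.mem_filter.mp hT).2 hx
    · intro T hT
      try dsimp only
      ext u
      rw [Finset.mem_subtype, Finset.mem_map]
      constructor
      · rintro ⟨a, ha, hau⟩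
        simp only [Function.Embedding.coe_subtype] at hau
        rwa [show a = u from Subtype.ext hau] at ha
      · intro h; exact ⟨u, h, rfl⟩
    · intro T hT
      try dsimp only
      congr 1
      exact (Finset.subtype_map_of_mem fun x hx => by
        simp only [Finset.mem_singleton]
        rintro rfl
        exact (Finset.mem_filter.mp hT).2 hx).symm

lemma nullity_subMat_insert (G : MarkedGraph V) (v : V)
    (hlooped : G.adj v v = 1) (hmarked : G.marked v = true)
    (T' : Finset {u : V // u ∉ ({v} : Finset V)}) :
    nullity (G.subMat (insert v (T'.map (Function.Embedding.subtype _)))) =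
      nullity ((G.delete {v}).subMat T') := by
  classical
  set T : Finset V := insert v (T'.map (Function.Embedding.subtype _)) with hT
  have hmemT : ∀ (x : V) (hx : x ∉ ({v} : Finset V)),
      (x ∈ T ↔ (⟨x, hx⟩ : {u : V // u ∉ ({v} : Finset V)}) ∈ T') := by
    intro x hx
    rw [hT, Finset.mem_insert, Finset.mem_map]
    constructor
    · rintro (h | ⟨a, ha, hax⟩)
      · exact absurd h (by simpa using hx)
      · simp only [Function.Embedding.coe_subtype] at hax
        rwa [show a = ⟨x, hx⟩ from Subtype.ext hax] at ha
    · intro h; exact Or.inr ⟨⟨x, hx⟩, h, rfl⟩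
  have hdelta : ∀ (x y : V) (hx : x ∉ ({v} : Finset V)) (hy : y ∉ ({v} : Finset V)),
      delta T x y = delta T' ⟨x, hx⟩ ⟨y, hy⟩ := by
    intro x y hx hy
    simp only [delta, Matrix.diagonal_apply, Subtype.mk.injEq]
    by_cases hxy : x = y
    · rw [if_pos hxy, if_pos hxy]
      subst hxy
      rw [if_congr (hmemT x hx) rfl rfl]
    · rw [if_neg hxy, if_neg hxy]
  have hentry : ∀ (x y : V) (hx : x ∉ ({v} : Finset V)) (hy : y ∉ ({v} : Finset V)),
      (G.adj + delta T) x y = ((G.delete {v}).adj + delta T') ⟨x, hx⟩ ⟨y, hy⟩ := by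
    intro x y hx hy
    show G.adj x y + delta T x y = G.adj x y + delta T' ⟨x, hx⟩ ⟨y, hy⟩
    rw [hdelta x y hx hy]
  have hkv : v ∉ G.keep T := by
    simp only [keep, Finset.mem_filter, Finset.mem_univ, true_and, not_not]
    refine ⟨hmarked, ?_⟩
    show G.adj v v + delta T v v = 0
    rw [hlooped]
    simp only [delta, Matrix.diagonal_apply_eq]
    rw [if_pos (show v ∈ T by rw [hT]; exact Finset.mem_insert_self _ _)]
    decide
  have hxv : ∀ x ∈ G.keep T, x ∉ ({v} : Finset V) := by
    intro x hxk
    simp only [Finset.mem_singleton]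
    rintro rfl
    exact hkv hxk
  have hkeep : ∀ (x : V) (hx : x ∉ ({v} : Finset V)),
      (x ∈ G.keep T ↔ (⟨x, hx⟩ : {u : V // u ∉ ({v} : Finset V)}) ∈ (G.delete {v}).keep T') := by
    intro x hx
    simp only [keep, Finset.mem_filter, Finset.mem_univ, true_and]
    rw [show ((G.delete {v}).adj + delta T') ⟨x, hx⟩ ⟨x, hx⟩ = (G.adj + delta T) x x from
      (hentry x x hx hx).symm]
    rfl
  let e : ((G.delete {v}).keep T') ≃ (G.keep T) :=
    { toFun := fun p => ⟨p.1.1, (hkeep p.1.1 p.1.2).mpr p.2⟩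
      invFun := fun q => ⟨⟨q.1, hxv q.1 q.2⟩, (hkeep q.1 (hxv q.1 q.2)).mp q.2⟩
      left_inv := fun p => Subtype.ext (Subtype.ext rfl)
      right_inv := fun q => Subtype.ext rfl }
  have hmat : G.subMat T = ((G.delete {v}).subMat T').submatrix e.symm e.symm := by
    ext i j
    exact hentry i.1 j.1 (hxv i.1 i.2) (hxv j.1 j.2)
  rw [hmat, nullity_reindex]

lemma nullity_subMat_map (G : MarkedGraph V) (hsym : G.adj.IsSymm) (v : V)
    (hlooped : G.adj v v = 1)
    (hnbr : ∀ x, G.nbr v x → G.marked x = false)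
    (T' : Finset {u : V // u ∉ ({v} : Finset V)}) :
    nullity (G.subMat (T'.map (Function.Embedding.subtype _))) =
      nullity (((G.localComp v).delete {v}).subMat T') := by
  classical
  set T : Finset V := T'.map (Function.Embedding.subtype _) with hT
  have hvT : v ∉ T := by
    rw [hT, Finset.mem_map]
    rintro ⟨a, ha, hav⟩
    simp only [Function.Embedding.coe_subtype] at hav
    exact absurd hav (by simpa using a.2)
  have hmemT : ∀ (x : V) (hx : x ∉ ({v} : Finset V)),
      (x ∈ T ↔ (⟨x, hx⟩ : {u : V // u ∉ ({v} : Finset V)}) ∈ T') := by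
    intro x hx
    rw [hT, Finset.mem_map]
    constructor
    · rintro ⟨a, ha, hax⟩
      simp only [Function.Embedding.coe_subtype] at hax
      rwa [show a = ⟨x, hx⟩ from Subtype.ext hax] at ha
    · intro h; exact ⟨⟨x, hx⟩, h, rfl⟩
  have hdelta : ∀ (x y : V) (hx : x ∉ ({v} : Finset V)) (hy : y ∉ ({v} : Finset V)),
      delta T x y = delta T' ⟨x, hx⟩ ⟨y, hy⟩ := by
    intro x y hx hy
    simp only [delta, Matrix.diagonal_apply, Subtype.mk.injEq]
    by_cases hxy : x = y
    · rw [if_pos hxy, if_pos hxy]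
      subst hxy
      rw [if_congr (hmemT x hx) rfl rfl]
    · rw [if_neg hxy, if_neg hxy]
  have hdv : (G.adj + delta T) v v = 1 := by
    show G.adj v v + delta T v v = 1
    rw [hlooped]
    simp only [delta, Matrix.diagonal_apply_eq]
    rw [if_neg hvT]
    decide
  have hkv : v ∈ G.keep T := by
    simp only [keep, Finset.mem_filter, Finset.mem_univ, true_and]
    rintro ⟨-, h0⟩
    rw [hdv] at h0
    exact one_ne_zero h0
  set vh : (G.keep T : Finset V) := (⟨v, hkv⟩ : {x : V // x ∈ G.keep T}) with hvh
  have hMvv : G.subMat T vh vh = 1 := hdv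
  rw [nullity_pivot (G.subMat T) vh hMvv]
  have hne : ∀ p : {x : {x : V // x ∈ G.keep T} // x ≠ vh}, p.1.1 ∉ ({v} : Finset V) := by
    intro p
    simp only [Finset.mem_singleton]
    intro h
    exact p.2 (Subtype.ext h)
  have hkeep : ∀ (x : V) (hx : x ∉ ({v} : Finset V)),
      (x ∈ G.keep T ↔
        (⟨x, hx⟩ : {u : V // u ∉ ({v} : Finset V)}) ∈ ((G.localComp v).delete {v}).keep T') := by
    intro x hx
    have hxv : x ≠ v := by simpa using hx
    simp only [keep, Finset.mem_filter, Finset.mem_univ, true_and]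
    have hmk : ((G.localComp v).delete {v}).marked ⟨x, hx⟩ = G.marked x := rfl
    rw [hmk]
    by_cases hm : G.marked x = true
    · have hnx : ¬ G.nbr v x := by
        intro h
        rw [hnbr x h] at hm
        exact Bool.false_ne_true hm
      have hdg : (((G.localComp v).delete {v}).adj + delta T') ⟨x, hx⟩ ⟨x, hx⟩
          = (G.adj + delta T) x x := by
        show (G.localComp v).adj x x + delta T' ⟨x, hx⟩ ⟨x, hx⟩ = G.adj x x + delta T x x
        rw [← hdelta x x hx hx]
        congr 1
        show (if G.nbr v x ∧ G.nbr v x then G.adj x x + 1 else G.adj x x) = G.adj x x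
        rw [if_neg (fun h => hnx h.1)]
      rw [hdg]
    · simp [hm]
  let e : {x : {x : V // x ∈ G.keep T} // x ≠ vh} ≃ (((G.localComp v).delete {v}).keep T') :=
    { toFun := fun p => ⟨⟨p.1.1, hne p⟩, (hkeep p.1.1 (hne p)).mp p.1.2⟩
      invFun := fun q => ⟨⟨q.1.1, (hkeep q.1.1 q.1.2).mpr q.2⟩, by
        intro h
        have hq : q.1.1 = v := congrArg Subtype.val h
        exact absurd hq (by simpa using q.1.2)⟩
      left_inv := fun p => Subtype.ext (Subtype.ext rfl)
      right_inv := fun q => Subtype.ext (Subtype.ext rfl) }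
  have hmat : (Matrix.of fun p q : {x : {x : V // x ∈ G.keep T} // x ≠ vh} =>
        G.subMat T p.1 q.1 + G.subMat T p.1 vh * G.subMat T vh q.1)
      = ((((G.localComp v).delete {v}).subMat T')).submatrix e e := by
    ext p q
    have hx : p.1.1 ∉ ({v} : Finset V) := hne p
    have hy : q.1.1 ∉ ({v} : Finset V) := hne q
    have hx' : p.1.1 ≠ v := by simpa using hx
    have hy' : q.1.1 ≠ v := by simpa using hy
    set x : V := p.1.1
    set y : V := q.1.1
    show (G.adj x y + delta T x y) + (G.adj x v + delta T x v) * (G.adj v y + delta T v y)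
      = (G.localComp v).adj x y + delta T' ⟨x, hx⟩ ⟨y, hy⟩
    have hdxv : delta T x v = 0 := Matrix.diagonal_apply_ne _ hx'
    have hdvy : delta T v y = 0 := Matrix.diagonal_apply_ne _ (fun h => hy' h.symm)
    have key : G.adj x v * G.adj v y = if G.nbr v x ∧ G.nbr v y then 1 else 0 := by
      rw [hsym.apply v x]
      simp only [nbr]
      rcases zmod2_cases (G.adj v x) with h1 | h1 <;>
        rcases zmod2_cases (G.adj v y) with h2 | h2 <;>
          simp [h1, h2, hx', hy']
    have hlc : (G.localComp v).adj x y
        = G.adj x y + (if G.nbr v x ∧ G.nbr v y then 1 else 0) := by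
      show (if G.nbr v x ∧ G.nbr v y then G.adj x y + 1 else G.adj x y) = _
      split <;> simp
    rw [hdxv, hdvy, add_zero, add_zero, key, hlc, ← hdelta x y hx hy]
    ring
  rw [hmat, nullity_reindex]

end MarkedGraph


/-- If `v` is a looped marked vertex with no marked neighbor then
`[G] = B⬝[G - v] + A⬝[G^v - v]`. -/
theorem bracket_looped_marked {V : Type} [Fintype V] [DecidableEq V]
    (G : MarkedGraph V) (hsym : G.adj.IsSymm) (v : V)
    (hlooped : G.adj v v = 1) (hmarked : G.marked v = true)
    (hnbr : ∀ x, G.nbr v x → G.marked x = false) :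
    G.bracket =
      X 1 * (G.delete {v}).bracket + X 0 * ((G.localComp v).delete {v}).bracket := by
  classical
  have hpos : 0 < Fintype.card V := Fintype.card_pos_iff.mpr ⟨v⟩
  have hn : Fintype.card V = Fintype.card {u : V // u ∉ ({v} : Finset V)} + 1 := by
    have e0 : {u : V // u ∉ ({v} : Finset V)} ≃ {u : V // ¬ u = v} :=
      Equiv.subtypeEquivRight (by simp)
    rw [Fintype.card_congr e0, Fintype.card_subtype_compl, Fintype.card_subtype_eq]
    omega
  have hA : ∀ T' : Finset {u : V // u ∉ ({v} : Finset V)},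
      (X 0 : MvPolynomial (Fin 3) ℤ) ^
          (Fintype.card V - (insert v (T'.map (Function.Embedding.subtype _))).card)
        * X 1 ^ (insert v (T'.map (Function.Embedding.subtype _))).card
        * X 2 ^ MarkedGraph.nullity (G.subMat (insert v (T'.map (Function.Embedding.subtype _))))
      = X 1 * ((X 0) ^ (Fintype.card {u : V // u ∉ ({v} : Finset V)} - T'.card)
        * X 1 ^ T'.card * X 2 ^ MarkedGraph.nullity ((G.delete {v}).subMat T')) := by
    intro T'
    have hv' : v ∉ T'.map (Function.Embedding.subtype _) := by
      rw [Finset.mem_map]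
      rintro ⟨a, ha, hav⟩
      simp only [Function.Embedding.coe_subtype] at hav
      exact absurd hav (by simpa using a.2)
    have hc : (insert v (T'.map (Function.Embedding.subtype _))).card = T'.card + 1 := by
      rw [Finset.card_insert_of_notMem hv', Finset.card_map]
    have hle : T'.card ≤ Fintype.card {u : V // u ∉ ({v} : Finset V)} := by
      simpa using Finset.card_le_univ T'
    rw [hc, MarkedGraph.nullity_subMat_insert G v hlooped hmarked T',
      show Fintype.card V - (T'.card + 1)
        = Fintype.card {u : V // u ∉ ({v} : Finset V)} - T'.card by omega]
    ring
  have hB : ∀ T' : Finset {u : V // u ∉ ({v} : Finset V)},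
      (X 0 : MvPolynomial (Fin 3) ℤ) ^
          (Fintype.card V - (T'.map (Function.Embedding.subtype _)).card)
        * X 1 ^ (T'.map (Function.Embedding.subtype _)).card
        * X 2 ^ MarkedGraph.nullity (G.subMat (T'.map (Function.Embedding.subtype _)))
      = X 0 * ((X 0) ^ (Fintype.card {u : V // u ∉ ({v} : Finset V)} - T'.card)
        * X 1 ^ T'.card * X 2 ^ MarkedGraph.nullity (((G.localComp v).delete {v}).subMat T')) := by
    intro T'
    have hc : (T'.map (Function.Embedding.subtype _)).card = T'.card := Finset.card_map _
    have hle : T'.card ≤ Fintype.card {u : V // u ∉ ({v} : Finset V)} := by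
      simpa using Finset.card_le_univ T'
    rw [hc, MarkedGraph.nullity_subMat_map G hsym v hlooped hnbr T',
      show Fintype.card V - T'.card
        = (Fintype.card {u : V // u ∉ ({v} : Finset V)} - T'.card) + 1 by omega]
    ring
  simp only [MarkedGraph.bracket]
  rw [MarkedGraph.finset_sum_split v, Finset.sum_congr rfl (fun T' _ => hA T'),
    Finset.sum_congr rfl (fun T' _ => hB T'), ← Finset.mul_sum, ← Finset.mul_sum,
    show (G.delete {v} : MarkedGraph {u : V // u ∉ ({v} : Finset V)}).freeLoops
      = G.freeLoops from rfl,
    show ((G.localComp v).delete {v} : MarkedGraph {u : V // u ∉ ({v} : Finset V)}).freeLoops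
      = G.freeLoops from rfl]
  ring
end

section
/- Suppose v is a looped marked vertex of the marked graph G (the neighbors of v may be marked or unmarked). Then B·[G] = A·[G − {v,v}] + (B² − A²)·[G − v]. (Equivalently, [G] = AB^{-1}·[G − {v,v}] + (B − A²B^{-1})·[G − v].) -/
open MvPolynomial

section Aux
open Finset

variable {V : Type} [Fintype V] [DecidableEq V]

lemma nullity_eq_card_sub_rank {ι : Type*} [Fintype ι] (M : Matrix ι ι (ZMod 2)) :
    MarkedGraph.nullity M = Fintype.card ι - M.rank := by
  have h := LinearMap.finrank_range_add_finrank_ker M.mulVecLin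
  rw [Module.finrank_fintype_fun_eq_card] at h
  unfold MarkedGraph.nullity Matrix.rank
  omega

lemma nullity_eq_of_equiv {ι κ : Type*} [Fintype ι] [Fintype κ]
    (M : Matrix ι ι (ZMod 2)) (N : Matrix κ κ (ZMod 2)) (e : ι ≃ κ)
    (h : ∀ i j, M i j = N (e i) (e j)) : MarkedGraph.nullity M = MarkedGraph.nullity N := by
  have hM : M = N.submatrix e e := by ext i j; exact h i j
  rw [nullity_eq_card_sub_rank, nullity_eq_card_sub_rank, hM, Matrix.rank_submatrix,
    Fintype.card_congr e]

lemma mem_keep_iff (G : MarkedGraph V) (T : Finset V) (x : V) :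
    x ∈ G.keep T ↔ ¬ (G.marked x = true ∧ G.adj x x + (if x ∈ T then 1 else 0) = 0) := by
  simp [MarkedGraph.keep, MarkedGraph.delta, Matrix.add_apply, Matrix.diagonal_apply_eq]

end Aux
section Aux2
open Finset

variable {V : Type} [Fintype V] [DecidableEq V]

lemma nullity_subMat_delete (H : MarkedGraph V) (v : V) (hmarked : H.marked v = true)
    (T : Finset V) (S : Finset {u : V // u ∉ ({v} : Finset V)})
    (hdiag : H.adj v v + (if v ∈ T then 1 else 0) = 0)
    (hS : ∀ (x : V) (hx : x ∉ ({v} : Finset V)),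
      x ∈ T ↔ (⟨x, hx⟩ : {u : V // u ∉ ({v} : Finset V)}) ∈ S) :
    MarkedGraph.nullity (H.subMat T) = MarkedGraph.nullity ((H.delete {v}).subMat S) := by
  have hvk : v ∉ H.keep T := by
    rw [mem_keep_iff]
    exact fun h => h ⟨hmarked, hdiag⟩
  have hfwd : ∀ x : V, x ∈ H.keep T → x ∉ ({v} : Finset V) := by
    intro x hx hxv
    rw [Finset.mem_singleton] at hxv
    exact hvk (hxv ▸ hx)
  have hiff : ∀ (x : V) (hx : x ∉ ({v} : Finset V)),
      x ∈ H.keep T ↔ (⟨x, hx⟩ : {u : V // u ∉ ({v} : Finset V)}) ∈ (H.delete {v}).keep S := by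
    intro x hx
    rw [mem_keep_iff, mem_keep_iff]
    have h1 : (H.delete {v}).adj ⟨x, hx⟩ ⟨x, hx⟩ = H.adj x x := rfl
    have hm : (H.delete {v}).marked ⟨x, hx⟩ = H.marked x := rfl
    rw [h1, hm]
    simp only [hS x hx]
  refine nullity_eq_of_equiv _ _
    ⟨fun x => ⟨⟨x.1, hfwd x.1 x.2⟩, (hiff x.1 (hfwd x.1 x.2)).1 x.2⟩,
     fun y => ⟨y.1.1, (hiff y.1.1 y.1.2).2 y.2⟩,
     fun x => Subtype.ext rfl, fun y => Subtype.ext (Subtype.ext rfl)⟩ ?_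
  intro i j
  show (H.adj + MarkedGraph.delta T) i.1 j.1
      = ((H.delete {v}).adj + MarkedGraph.delta S) ⟨i.1, _⟩ ⟨j.1, _⟩
  have hadj : (H.delete {v}).adj ⟨i.1, hfwd i.1 i.2⟩ ⟨j.1, hfwd j.1 j.2⟩ = H.adj i.1 j.1 := rfl
  simp only [Matrix.add_apply, hadj, MarkedGraph.delta, Matrix.diagonal_apply]
  congr 1
  by_cases hij : (i : V) = (j : V)
  · have heq : (⟨i.1, hfwd i.1 i.2⟩ : {u : V // u ∉ ({v} : Finset V)}) = ⟨j.1, hfwd j.1 j.2⟩ :=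
      Subtype.ext hij
    rw [if_pos hij, if_pos heq]
    simp only [hS i.1 (hfwd i.1 i.2)]
  · have hne : ¬ (⟨i.1, hfwd i.1 i.2⟩ : {u : V // u ∉ ({v} : Finset V)}) = ⟨j.1, hfwd j.1 j.2⟩ := by
      intro h
      exact hij (congrArg (fun z : {u : V // u ∉ ({v} : Finset V)} => z.1) h)
    rw [if_neg hij, if_neg hne]

end Aux2
section Aux3
open Finset

variable {V : Type} [Fintype V] [DecidableEq V]

lemma nullity_removeLoop_insert (G : MarkedGraph V) (v : V) (hlooped : G.adj v v = 1)
    (T : Finset V) (hvT : v ∉ T) :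
    MarkedGraph.nullity (G.subMat T) =
      MarkedGraph.nullity ((G.removeLoop v).subMat (insert v T)) := by
  have hM : G.adj + MarkedGraph.delta T
      = (G.removeLoop v).adj + MarkedGraph.delta (insert v T) := by
    ext x y
    rw [Matrix.add_apply, Matrix.add_apply]
    simp only [Matrix.add_apply, MarkedGraph.removeLoop, MarkedGraph.delta,
      Matrix.diagonal_apply]
    by_cases hxy : x = y
    · subst hxy
      by_cases hxv : x = v
      · subst hxv
        simp [hvT, hlooped]
      · simp [hxv, Finset.mem_insert]
    · rw [if_neg hxy, if_neg hxy, if_neg]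
      rintro ⟨rfl, rfl⟩
      exact hxy rfl
  have hk : ∀ x, x ∈ G.keep T ↔ x ∈ (G.removeLoop v).keep (insert v T) := by
    intro x
    rw [mem_keep_iff, mem_keep_iff]
    have hm : (G.removeLoop v).marked x = G.marked x := rfl
    have hd := congrFun (congrFun hM x) x
    simp only [Matrix.add_apply, MarkedGraph.delta, Matrix.diagonal_apply_eq] at hd
    rw [hm, hd]
  refine nullity_eq_of_equiv _ _ (Equiv.subtypeEquivRight hk) ?_
  intro i j
  exact congrFun (congrFun hM i.1) j.1

lemma removeLoop_delete (G : MarkedGraph V) (v : V) :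
    (G.removeLoop v).delete {v} = G.delete {v} := by
  unfold MarkedGraph.delete
  congr 1
  funext x y
  show (if (x : V) = v ∧ (y : V) = v then 0 else G.adj x y) = G.adj x y
  rw [if_neg]
  rintro ⟨h1, _⟩
  exact x.2 (Finset.mem_singleton.mpr h1)

lemma sum_split {M : Type*} [AddCommMonoid M] (v : V) (f : Finset V → M) :
    ∑ T : Finset V, f T =
      (∑ S : Finset {u : V // u ∉ ({v} : Finset V)},
        f (S.map (Function.Embedding.subtype fun u => u ∉ ({v} : Finset V)))) +
      ∑ S : Finset {u : V // u ∉ ({v} : Finset V)},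
        f (insert v (S.map (Function.Embedding.subtype fun u => u ∉ ({v} : Finset V)))) := by
  have key : ∀ g : Finset V → M,
      ∑ T ∈ (Finset.univ.erase v).powerset, g T =
        ∑ S : Finset {u : V // u ∉ ({v} : Finset V)},
          g (S.map (Function.Embedding.subtype fun u => u ∉ ({v} : Finset V))) := by
    intro g
    refine Finset.sum_bij' (fun T _ => T.subtype fun u => u ∉ ({v} : Finset V))
      (fun S _ => S.map (Function.Embedding.subtype fun u => u ∉ ({v} : Finset V)))
      (fun T hT => Finset.mem_univ _) ?_ ?_ ?_ ?_
    · intro S _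
      rw [Finset.mem_powerset]
      intro x hx
      rw [Finset.mem_map] at hx
      obtain ⟨a, _, rfl⟩ := hx
      exact Finset.mem_erase.mpr ⟨fun h => a.2 (Finset.mem_singleton.mpr h), Finset.mem_univ _⟩
    · intro T hT
      try dsimp only
      rw [Finset.subtype_map]
      refine Finset.filter_true_of_mem ?_
      intro x hx hxv
      rw [Finset.mem_powerset] at hT
      exact (Finset.mem_erase.mp (hT hx)).1 (Finset.mem_singleton.mp hxv)
    · intro S _
      try dsimp only
      ext a
      simp only [Finset.mem_subtype, Finset.mem_map, Function.Embedding.coe_subtype]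
      constructor
      · rintro ⟨b, hb, hba⟩
        rwa [show a = b from Subtype.ext hba.symm]
      · intro ha
        exact ⟨a, ha, rfl⟩
    · intro T hT
      try dsimp only
      rw [Finset.subtype_map, Finset.filter_true_of_mem]
      intro x hx hxv
      rw [Finset.mem_powerset] at hT
      exact (Finset.mem_erase.mp (hT hx)).1 (Finset.mem_singleton.mp hxv)
  calc ∑ T : Finset V, f T
      = ∑ T ∈ (insert v (Finset.univ.erase v)).powerset, f T := by
        rw [Finset.insert_erase (Finset.mem_univ v), Finset.powerset_univ]
    _ = (∑ T ∈ (Finset.univ.erase v).powerset, f T) +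
          ∑ T ∈ (Finset.univ.erase v).powerset, f (insert v T) :=
        Finset.sum_powerset_insert (Finset.notMem_erase v Finset.univ) f
    _ = _ := by rw [key f, key fun T => f (insert v T)]

end Aux3
/-- If `v` is a looped marked vertex (neighbors arbitrary) then
`B⬝[G] = A⬝[G - {v,v}] + (B² - A²)⬝[G - v]`. -/
theorem bracket_old_recursion {V : Type} [Fintype V] [DecidableEq V]
    (G : MarkedGraph V) (hsym : G.adj.IsSymm) (v : V)
    (hlooped : G.adj v v = 1) (hmarked : G.marked v = true) :
    X 1 * G.bracket =
      X 0 * (G.removeLoop v).bracket +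
        (X 1 ^ 2 - X 0 ^ 2) * (G.delete {v}).bracket := by
  classical
  have hm : Fintype.card {u : V // u ∉ ({v} : Finset V)} = Fintype.card V - 1 := by
    rw [Fintype.card_subtype_compl, Fintype.card_coe, Finset.card_singleton]
  have hn1 : 0 < Fintype.card V := Fintype.card_pos_iff.mpr ⟨v⟩
  have hSle : ∀ S : Finset {u : V // u ∉ ({v} : Finset V)},
      S.card ≤ Fintype.card {u : V // u ∉ ({v} : Finset V)} := fun S => Finset.card_le_univ S
  have hvS : ∀ S : Finset {u : V // u ∉ ({v} : Finset V)},
      v ∉ S.map (Function.Embedding.subtype fun u => u ∉ ({v} : Finset V)) := by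
    intro S h
    rw [Finset.mem_map] at h
    obtain ⟨a, _, ha⟩ := h
    exact a.2 (Finset.mem_singleton.mpr ha)
  have hmem : ∀ (S : Finset {u : V // u ∉ ({v} : Finset V)}) (x : V)
      (hx : x ∉ ({v} : Finset V)),
      x ∈ S.map (Function.Embedding.subtype fun u => u ∉ ({v} : Finset V)) ↔
        (⟨x, hx⟩ : {u : V // u ∉ ({v} : Finset V)}) ∈ S := by
    intro S x hx
    rw [Finset.mem_map]
    constructor
    · rintro ⟨a, ha, rfl⟩
      exact (show a = ⟨a.1, hx⟩ from Subtype.ext rfl) ▸ ha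
    · intro h
      exact ⟨⟨x, hx⟩, h, rfl⟩
  have hmem' : ∀ (S : Finset {u : V // u ∉ ({v} : Finset V)}) (x : V)
      (hx : x ∉ ({v} : Finset V)),
      x ∈ insert v (S.map (Function.Embedding.subtype fun u => u ∉ ({v} : Finset V))) ↔
        (⟨x, hx⟩ : {u : V // u ∉ ({v} : Finset V)}) ∈ S := by
    intro S x hx
    rw [Finset.mem_insert, hmem S x hx]
    have : ¬ x = v := fun h => hx (Finset.mem_singleton.mpr h)
    tauto
  -- the three nullity identifications
  have nA : ∀ S : Finset {u : V // u ∉ ({v} : Finset V)},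
      MarkedGraph.nullity (G.subMat
        (insert v (S.map (Function.Embedding.subtype fun u => u ∉ ({v} : Finset V))))) =
      MarkedGraph.nullity ((G.delete {v}).subMat S) := by
    intro S
    refine nullity_subMat_delete G v hmarked _ S ?_ (hmem' S)
    rw [if_pos (Finset.mem_insert_self v _), hlooped]
    decide
  have nB : ∀ S : Finset {u : V // u ∉ ({v} : Finset V)},
      MarkedGraph.nullity ((G.removeLoop v).subMat
        (S.map (Function.Embedding.subtype fun u => u ∉ ({v} : Finset V)))) =
      MarkedGraph.nullity ((G.delete {v}).subMat S) := by
    intro S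
    have h := nullity_subMat_delete (G.removeLoop v) v hmarked _ S ?_ (hmem S)
    · rwa [removeLoop_delete] at h
    · rw [if_neg (hvS S)]
      show (if v = v ∧ v = v then 0 else G.adj v v) + 0 = 0
      rw [if_pos ⟨rfl, rfl⟩]
      decide
  have nC : ∀ S : Finset {u : V // u ∉ ({v} : Finset V)},
      MarkedGraph.nullity (G.subMat
        (S.map (Function.Embedding.subtype fun u => u ∉ ({v} : Finset V)))) =
      MarkedGraph.nullity ((G.removeLoop v).subMat
        (insert v (S.map (Function.Embedding.subtype fun u => u ∉ ({v} : Finset V))))) :=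
    fun S => nullity_removeLoop_insert G v hlooped _ (hvS S)
  -- abbreviations for the two half-sums
  set P : MvPolynomial (Fin 3) ℤ :=
    ∑ S : Finset {u : V // u ∉ ({v} : Finset V)},
      X 0 ^ (Fintype.card {u : V // u ∉ ({v} : Finset V)} - S.card) * X 1 ^ S.card *
        X 2 ^ MarkedGraph.nullity ((G.delete {v}).subMat S) with hP
  set Q : MvPolynomial (Fin 3) ℤ :=
    ∑ S : Finset {u : V // u ∉ ({v} : Finset V)},
      X 0 ^ (Fintype.card {u : V // u ∉ ({v} : Finset V)} - S.card) * X 1 ^ S.card *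
        X 2 ^ MarkedGraph.nullity (G.subMat
          (S.map (Function.Embedding.subtype fun u => u ∉ ({v} : Finset V)))) with hQ
  have hbdel : (G.delete {v}).bracket = X 2 ^ G.freeLoops * P := by
    rw [hP]
    rfl
  have hbG : G.bracket = X 2 ^ G.freeLoops * (X 0 * Q + X 1 * P) := by
    unfold MarkedGraph.bracket
    congr 1
    rw [sum_split v (fun T => X 0 ^ (Fintype.card V - T.card) * X 1 ^ T.card *
      X 2 ^ MarkedGraph.nullity (G.subMat T))]
    congr 1
    · rw [hQ, Finset.mul_sum]
      refine Finset.sum_congr rfl fun S _ => ?_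
      have hle := hSle S
      have he : Fintype.card V - (S.map (Function.Embedding.subtype
          fun u => u ∉ ({v} : Finset V))).card =
          (Fintype.card {u : V // u ∉ ({v} : Finset V)} - S.card) + 1 := by
        rw [Finset.card_map]
        omega
      rw [he, pow_succ, Finset.card_map]
      ring
    · rw [hP, Finset.mul_sum]
      refine Finset.sum_congr rfl fun S _ => ?_
      have hle := hSle S
      have hc : (insert v (S.map (Function.Embedding.subtype
          fun u => u ∉ ({v} : Finset V)))).card = S.card + 1 := by
        rw [Finset.card_insert_of_notMem (hvS S), Finset.card_map]
      have he : Fintype.card V - (S.card + 1) =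
          Fintype.card {u : V // u ∉ ({v} : Finset V)} - S.card := by omega
      rw [hc, he, nA S, pow_succ]
      ring
  have hbG' : (G.removeLoop v).bracket = X 2 ^ G.freeLoops * (X 0 * P + X 1 * Q) := by
    unfold MarkedGraph.bracket
    congr 1
    rw [sum_split v (fun T => X 0 ^ (Fintype.card V - T.card) * X 1 ^ T.card *
      X 2 ^ MarkedGraph.nullity ((G.removeLoop v).subMat T))]
    refine congrArg₂ (· + ·) ?_ ?_
    · rw [hP, Finset.mul_sum]
      refine Finset.sum_congr rfl fun S _ => ?_
      have hle := hSle S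
      have he : Fintype.card V - (S.map (Function.Embedding.subtype
          fun u => u ∉ ({v} : Finset V))).card =
          (Fintype.card {u : V // u ∉ ({v} : Finset V)} - S.card) + 1 := by
        rw [Finset.card_map]
        omega
      rw [he, pow_succ, Finset.card_map, nB S]
      ring
    · rw [hQ, Finset.mul_sum]
      refine Finset.sum_congr rfl fun S _ => ?_
      have hle := hSle S
      have hc : (insert v (S.map (Function.Embedding.subtype
          fun u => u ∉ ({v} : Finset V)))).card = S.card + 1 := by
        rw [Finset.card_insert_of_notMem (hvS S), Finset.card_map]
      have he : Fintype.card V - (S.card + 1) =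
          Fintype.card {u : V // u ∉ ({v} : Finset V)} - S.card := by omega
      rw [hc, he, ← nC S, pow_succ]
      ring
  rw [hbG, hbG', hbdel]
  ring
end
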